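/- Let S₁,…,Sₙ be independent random variables with Sᵢ geometrically distributed with parameter pᵢ ∈ (0,1). Then the joint entropy H(S₁,…,Sₙ) ≥ Σᵢ log₂(1/pᵢ) + Σᵢ (1-pᵢ). -/

import Mathlib

set_option maxHeartbeats 1000000

open Real Finset

/-- Fubini for products over Pi types: if each `q i` has sum `t i`, then the
product function on `Fin n → ℕ` has sum `∏ t i`. -/
lemma hasSum_pi_prod : ∀ (n : ℕ) (q : Fin n → ℕ → ℝ) (t : Fin n → ℝ),
    (∀ i k, 0 ≤ q i k) → (∀ i, HasSum (q i) (t i)) →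
    HasSum (fun s : Fin n → ℕ => ∏ i, q i (s i)) (∏ i, t i) := by
  intro n
  induction n with
  | zero =>
    intro q t _ _
    simpa using hasSum_fintype (fun s : Fin 0 → ℕ => ∏ i, q i (s i))
  | succ n ih =>
    intro q t hq hqs
    have h0 : HasSum (q 0) (t 0) := hqs 0
    have hrest : HasSum (fun s : Fin n → ℕ => ∏ i, q (i.succ) (s i)) (∏ i : Fin n, t i.succ) :=
      ih (fun i => q i.succ) (fun i => t i.succ) (fun i k => hq i.succ k) (fun i => hqs i.succ)
    have hsumm : Summable (fun x : ℕ × (Fin n → ℕ) =>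
        q 0 x.1 * ∏ i : Fin n, q (i.succ) (x.2 i)) := by
      apply Summable.mul_of_nonneg h0.summable hrest.summable
      · intro k; exact hq 0 k
      · intro s; exact Finset.prod_nonneg fun i _ => hq i.succ (s i)
    have hmul := HasSum.mul (α := ℝ) h0 hrest hsumm
    rw [Fin.prod_univ_succ]
    refine ((Fin.consEquiv (fun _ : Fin (n + 1) => ℕ)).hasSum_iff).mp ?_
    have hfe : ((fun s : Fin (n + 1) → ℕ => ∏ i, q i (s i)) ∘
        ⇑(Fin.consEquiv fun _ : Fin (n + 1) => ℕ)) =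
        fun x : ℕ × (Fin n → ℕ) => q 0 x.1 * ∏ i : Fin n, q i.succ (x.2 i) := by
      funext x
      simp [Fin.consEquiv, Fin.prod_univ_succ]
    rw [hfe]
    exact hmul

theorem joint_geometric_entropy (n : ℕ) (p : Fin n → ℝ)
    (hp : ∀ i, p i ∈ Set.Ioo (0 : ℝ) 1) :
    (∑ i, Real.logb 2 (1 / p i)) + (∑ i, (1 - p i)) ≤
      ∑' s : Fin n → ℕ,
        (∏ i, (1 - p i) ^ (s i) * p i) *
          Real.logb 2 (1 / ∏ i, (1 - p i) ^ (s i) * p i) := by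
  have hp0 : ∀ i, 0 < p i := fun i => (hp i).1
  have hp1 : ∀ i, p i < 1 := fun i => (hp i).2
  have hr0 : ∀ i, 0 < 1 - p i := fun i => by linarith [hp1 i]
  have hr1 : ∀ i, 1 - p i < 1 := fun i => by linarith [hp0 i]
  set q : Fin n → ℕ → ℝ := fun i k => (1 - p i) ^ k * p i with hqdef
  have hqpos : ∀ i k, 0 < q i k := fun i k =>
    mul_pos (pow_pos (hr0 i) k) (hp0 i)
  set A : Fin n → ℝ := fun i => -Real.logb 2 (1 - p i) with hAdef
  set B : Fin n → ℝ := fun i => Real.logb 2 (1 / p i) with hBdef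
  have hApos : ∀ i, 0 < A i := by
    intro i
    have : Real.logb 2 (1 - p i) < 0 :=
      Real.logb_neg one_lt_two (hr0 i) (hr1 i)
    simpa [hAdef] using this
  have hBpos : ∀ i, 0 < B i := by
    intro i
    have : 0 < Real.logb 2 (1 / p i) :=
      Real.logb_pos one_lt_two (by rw [lt_div_iff₀ (hp0 i)]; linarith [hp1 i])
    simpa [hBdef] using this
  -- key inequality: p i ≤ A i
  have hAp : ∀ i, p i ≤ A i := by
    intro i
    have hlog : Real.log (1 - p i) ≤ -p i := by
      have := Real.log_le_sub_one_of_pos (hr0 i)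
      linarith
    have hlog2 : (0 : ℝ) < Real.log 2 := Real.log_pos one_lt_two
    have hlog2le : Real.log 2 ≤ 1 := by
      have := Real.log_le_sub_one_of_pos (by norm_num : (0:ℝ) < 2)
      linarith
    have hlneg : Real.log (1 - p i) ≤ 0 :=
      hlog.trans (by linarith [hp0 i])
    have : Real.log (1 - p i) / Real.log 2 ≤ Real.log (1 - p i) := by
      rw [div_le_iff₀ hlog2]
      nlinarith
    have : Real.logb 2 (1 - p i) ≤ -p i := by
      rw [Real.logb]; exact this.trans hlog
    simp only [hAdef]; linarith
  -- each geometric weight has sum 1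
  have hq1 : ∀ i, HasSum (q i) 1 := by
    intro i
    have hg : HasSum (fun k : ℕ => (1 - p i) ^ k) (1 - (1 - p i))⁻¹ :=
      hasSum_geometric_of_lt_one (le_of_lt (hr0 i)) (hr1 i)
    have := hg.mul_right (p i)
    simpa [hqdef, sub_sub_cancel, inv_mul_cancel₀ (ne_of_gt (hp0 i))] using this
  -- weighted sum: ∑ k, (k*A+B) * q i k = A*(1-p)/p + B
  have hqw : ∀ i, HasSum (fun k : ℕ => ((k : ℝ) * A i + B i) * q i k)
      (A i * ((1 - p i) / p i) + B i) := by
    intro i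
    have hnorm : ‖(1 - p i)‖ < 1 := by
      rw [Real.norm_eq_abs, abs_of_pos (hr0 i)]; exact hr1 i
    have hg : HasSum (fun k : ℕ => (k : ℝ) * (1 - p i) ^ k)
        ((1 - p i) / (1 - (1 - p i)) ^ 2) := hasSum_coe_mul_geometric_of_norm_lt_one hnorm
    have hg2 : HasSum (fun k : ℕ => (k : ℝ) * q i k) ((1 - p i) / p i) := by
      have := (hg.mul_right (p i)).mul_left (A i / A i)
      have h2 := hg.mul_right (p i)
      have hne : p i ≠ 0 := (hp0 i).ne'
      have heq : (1 - p i) / (1 - (1 - p i)) ^ 2 * p i = (1 - p i) / p i := by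
        rw [sub_sub_cancel, sq]
        field_simp
      have : HasSum (fun k : ℕ => (k : ℝ) * (1 - p i) ^ k * p i) ((1 - p i) / p i) :=
        heq ▸ h2
      simpa [hqdef, mul_assoc] using this
    have hA := hg2.mul_left (A i)
    have hB := (hq1 i).mul_left (B i)
    have := hA.add hB
    have e1 : (fun k : ℕ => ((k : ℝ) * A i + B i) * q i k) =
        fun b : ℕ => A i * ((b : ℝ) * q i b) + B i * q i b := by
      funext k; ring
    rw [mul_one] at this
    rw [e1]
    exact this
  -- entropy term rewriting
  have hprodpos : ∀ s : Fin n → ℕ, 0 < ∏ i, q i (s i) := fun s =>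
    Finset.prod_pos fun i _ => hqpos i (s i)
  have hlogrw : ∀ s : Fin n → ℕ,
      Real.logb 2 (1 / ∏ i, q i (s i)) = ∑ i, ((s i : ℝ) * A i + B i) := by
    intro s
    rw [one_div, Real.logb_inv, Real.logb_prod _ _ (fun i _ => ne_of_gt (hqpos i (s i)))]
    rw [← Finset.sum_neg_distrib]
    congr 1
    funext i
    rw [hqdef]
    rw [Real.logb_mul (pow_pos (hr0 i) (s i)).ne' (ne_of_gt (hp0 i)), Real.logb_pow]
    simp only [hAdef, hBdef, one_div, Real.logb_inv]
    ring
  -- the summand as a finite sum of product functions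
  set r : Fin n → Fin n → ℕ → ℝ := fun i j k =>
    (if j = i then ((k : ℝ) * A i + B i) else 1) * q j k with hrdef
  have hrnonneg : ∀ i j k, 0 ≤ r i j k := by
    intro i j k
    apply mul_nonneg _ (le_of_lt (hqpos j k))
    split
    · have := (hApos i).le
      have := (hBpos i).le
      positivity
    · norm_num
  have hrsum : ∀ i j, HasSum (r i j)
      (if j = i then A i * ((1 - p i) / p i) + B i else 1) := by
    intro i j
    by_cases h : j = i
    · subst h
      simp only [hrdef, if_pos rfl]
      simpa using hqw j
    · simp only [hrdef, if_neg h]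
      simpa using hq1 j
  have hG : ∀ i, HasSum (fun s : Fin n → ℕ => ∏ j, r i j (s j))
      (A i * ((1 - p i) / p i) + B i) := by
    intro i
    have := hasSum_pi_prod n (r i)
      (fun j => if j = i then A i * ((1 - p i) / p i) + B i else 1)
      (fun j k => hrnonneg i j k) (fun j => hrsum i j)
    simpa using this
  have hrw : ∀ s : Fin n → ℕ,
      (∏ i, q i (s i)) * Real.logb 2 (1 / ∏ i, q i (s i))
        = ∑ i, ∏ j, r i j (s j) := by
    intro s
    rw [hlogrw s, Finset.mul_sum]
    refine Finset.sum_congr rfl fun i _ => ?_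
    simp only [hrdef]
    conv_rhs => rw [Finset.prod_mul_distrib]
    simp only [Finset.prod_ite_eq', Finset.mem_univ, if_true]
    ring
  have hF : HasSum (fun s : Fin n → ℕ =>
      (∏ i, q i (s i)) * Real.logb 2 (1 / ∏ i, q i (s i)))
      (∑ i, (A i * ((1 - p i) / p i) + B i)) := by
    have := hasSum_sum (s := Finset.univ) (f := fun i (s : Fin n → ℕ) => ∏ j, r i j (s j))
      (a := fun i => A i * ((1 - p i) / p i) + B i) (fun i _ => hG i)
    convert this using 1
    funext s
    exact hrw s
  rw [hF.tsum_eq]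
  rw [← Finset.sum_add_distrib]
  apply Finset.sum_le_sum
  intro i _
  have hpi := hp0 i
  have hri := hr0 i
  have h2 : p i * ((1 - p i) / p i) ≤ A i * ((1 - p i) / p i) :=
    mul_le_mul_of_nonneg_right (hAp i) (by positivity)
  have h3 : p i * ((1 - p i) / p i) = 1 - p i := by field_simp
  simp only [hBdef]
  linarith
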